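/- The proximity region N_PE^r(x, M) in a triangle T is similar to T with similarity ratio min(d(v(x), e(x)), r·d(v(x), ℓ(v(x),x))) / d(v(x), e(x)). -/

import Mathlib

open Set

/-- The closed triangle with vertices given by the affine basis `b` of the plane. -/
noncomputable def Tri (b : AffineBasis (Fin 3) ℝ (EuclideanSpace ℝ (Fin 2))) :
    Set (EuclideanSpace ℝ (Fin 2)) :=
  convexHull ℝ (Set.range ⇑b)

/-- The proportional-edge proximity region `N_PE^r(x)` for a point `x` whose vertex region
corresponds to the vertex `b i`: the image of the triangle under the homothety centered at
`b i` with ratio `r·(1 - b.coord i x)` (the triangle similar to `T` with vertex `b i` and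
opposite edge at distance `r·d(b i, ℓ(b i,x))` from `b i`), intersected with the triangle. -/
noncomputable def NPE (b : AffineBasis (Fin 3) ℝ (EuclideanSpace ℝ (Fin 2)))
    (r : ℝ) (i : Fin 3) (x : EuclideanSpace ℝ (Fin 2)) :
    Set (EuclideanSpace ℝ (Fin 2)) :=
  (AffineMap.homothety (b i) (r * (1 - b.coord i x)) '' Tri b) ∩ Tri b

lemma homothety_image_subset (b : AffineBasis (Fin 3) ℝ (EuclideanSpace ℝ (Fin 2)))
    (i : Fin 3) {k : ℝ} (hk0 : 0 ≤ k) (hk1 : k ≤ 1) :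
    AffineMap.homothety (b i) k '' Tri b ⊆ Tri b := by
  rintro _ ⟨y, hy, rfl⟩
  have hc : b i ∈ Tri b := subset_convexHull ℝ _ ⟨i, rfl⟩
  have hconv := convex_convexHull ℝ (Set.range ⇑b)
  rw [AffineMap.homothety_apply]
  have heq : k • (y -ᵥ b i) +ᵥ b i = k • y + (1 - k) • b i := by
    simp only [vsub_eq_sub, vadd_eq_add, smul_sub, sub_smul, one_smul]
    abel
  rw [heq]
  exact hconv hy hc hk0 (by linarith) (by ring)

lemma subset_homothety_image (b : AffineBasis (Fin 3) ℝ (EuclideanSpace ℝ (Fin 2)))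
    (i : Fin 3) {k : ℝ} (hk : 1 ≤ k) :
    Tri b ⊆ AffineMap.homothety (b i) k '' Tri b := by
  intro y hy
  have hk0 : (0:ℝ) < k := lt_of_lt_of_le one_pos hk
  refine ⟨AffineMap.homothety (b i) k⁻¹ y,
    homothety_image_subset b i (by positivity) (inv_le_one_of_one_le₀ hk) ⟨y, hy, rfl⟩, ?_⟩
  rw [← AffineMap.homothety_mul_apply, mul_inv_cancel₀ (ne_of_gt hk0),
    AffineMap.homothety_one, AffineMap.id_apply]

lemma le_infDist_iff' {S : Set (EuclideanSpace ℝ (Fin 2))} (hS : S.Nonempty)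
    (p : EuclideanSpace ℝ (Fin 2)) (c : ℝ) :
    c ≤ Metric.infDist p S ↔ ∀ w ∈ S, c ≤ dist p w := by
  constructor
  · intro h w hw
    exact le_trans h (Metric.infDist_le_dist_of_mem hw)
  · intro h
    by_contra hc
    push_neg at hc
    rw [Metric.infDist_lt_iff hS] at hc
    obtain ⟨w, hw, hlt⟩ := hc
    exact absurd hlt (not_lt.mpr (h w hw))

lemma infDist_homothety_image (b : AffineBasis (Fin 3) ℝ (EuclideanSpace ℝ (Fin 2)))
    (i : Fin 3) (k : ℝ) (hk0 : 0 ≤ k) (S : Set (EuclideanSpace ℝ (Fin 2))) (hS : S.Nonempty) :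
    Metric.infDist (b i) (AffineMap.homothety (b i) k '' S) = k * Metric.infDist (b i) S := by
  rcases eq_or_lt_of_le hk0 with rfl | hk
  · have himg : (AffineMap.homothety (b i) (0:ℝ)) '' S = {b i} := by
      obtain ⟨w, hw⟩ := hS
      apply Subset.antisymm
      · rintro _ ⟨u, hu, rfl⟩
        simp [AffineMap.homothety_apply]
      · rintro _ rfl
        exact ⟨w, hw, by simp [AffineMap.homothety_apply]⟩
    rw [himg, Metric.infDist_singleton, dist_self, zero_mul]
  · apply le_antisymm
    · have h2 : Metric.infDist (b i) (AffineMap.homothety (b i) k '' S) / k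
          ≤ Metric.infDist (b i) S := by
        rw [le_infDist_iff' hS]
        intro w hw
        rw [div_le_iff₀ hk]
        calc Metric.infDist (b i) (AffineMap.homothety (b i) k '' S)
            ≤ dist (b i) (AffineMap.homothety (b i) k w) :=
              Metric.infDist_le_dist_of_mem ⟨w, hw, rfl⟩
          _ = k * dist (b i) w := by
              rw [dist_center_homothety, Real.norm_eq_abs, abs_of_nonneg hk0]
          _ = dist (b i) w * k := by ring
      calc Metric.infDist (b i) (AffineMap.homothety (b i) k '' S)
          = (Metric.infDist (b i) (AffineMap.homothety (b i) k '' S) / k) * k := by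
            field_simp
        _ ≤ Metric.infDist (b i) S * k := mul_le_mul_of_nonneg_right h2 hk0
        _ = k * Metric.infDist (b i) S := by ring
    · rw [le_infDist_iff' (hS.image _)]
      rintro _ ⟨w, hw, rfl⟩
      rw [dist_center_homothety, Real.norm_eq_abs, abs_of_nonneg hk0]
      exact mul_le_mul_of_nonneg_left (Metric.infDist_le_dist_of_mem hw) hk0

/-- The proximity region `N_PE^r(x, M)` is similar to the triangle `T` with similarity
ratio `min(d(v(x), e(x)), r·d(v(x), ℓ(v(x),x))) / d(v(x), e(x))`: it is the image of `T`
under the homothety centered at the vertex `v(x)` with that ratio.  Here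
`d(v(x), e(x)) = infDist (b (v x)) {z | coord z = 0}` is the distance from the vertex to
the line of the opposite edge, and `d(v(x), ℓ(v(x),x)) = infDist (b (v x))
{z | coord z = coord x}` is the distance from the vertex to the line through `x` parallel
to that edge. -/
theorem NPE_similarity_ratio (b : AffineBasis (Fin 3) ℝ (EuclideanSpace ℝ (Fin 2)))
    (v : EuclideanSpace ℝ (Fin 2) → Fin 3)
    (r : ℝ) (hr : 1 ≤ r)
    (x : EuclideanSpace ℝ (Fin 2)) (hx : x ∈ Tri b) (hxv : ∀ i, x ≠ b i)
    (de dl : ℝ)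
    (hde : de = Metric.infDist (b (v x)) {z | b.coord (v x) z = 0})
    (hdl : dl = Metric.infDist (b (v x)) {z | b.coord (v x) z = b.coord (v x) x}) :
    NPE b r (v x) x =
      AffineMap.homothety (b (v x)) (min de (r * dl) / de) '' Tri b := by
  set i := v x with hi
  set t := b.coord i x with htdef
  have hcoord : ∀ j, 0 ≤ b.coord j x := by
    rw [Tri, b.convexHull_eq_nonneg_coord] at hx; exact hx
  have hsum : ∑ j, b.coord j x = 1 := b.sum_coord_apply_eq_one x
  have hsum' : t + ∑ j ∈ Finset.univ.erase i, b.coord j x = 1 := by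
    rw [htdef, ← hsum]
    exact Finset.add_sum_erase Finset.univ (fun j => b.coord j x) (Finset.mem_univ i)
  have ht0 : 0 ≤ t := hcoord i
  have ht1' : t ≤ 1 := by
    have := Finset.sum_nonneg (fun j (_ : j ∈ Finset.univ.erase i) => hcoord j)
    linarith
  have ht1 : t < 1 := by
    rcases eq_or_lt_of_le ht1' with h | h
    · exfalso
      apply hxv i
      apply b.ext_elem
      intro j
      by_cases hj : j = i
      · rw [hj, b.coord_apply_eq]
        rw [htdef] at h
        exact h
      · rw [b.coord_apply_ne hj]
        have hrest : ∑ j ∈ Finset.univ.erase i, b.coord j x = 0 := by linarith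
        exact (Finset.sum_eq_zero_iff_of_nonneg (fun j _ => hcoord j)).mp hrest j
          (Finset.mem_erase.mpr ⟨hj, Finset.mem_univ j⟩)
    · exact h
  have haff : ∀ (k : ℝ) w, b.coord i (AffineMap.homothety (b i) k w)
      = k * (b.coord i w - 1) + 1 := by
    intro k w
    rw [AffineMap.homothety_apply, AffineMap.map_vadd, LinearMap.map_smul,
      AffineMap.linearMap_vsub, b.coord_apply_eq]
    simp [smul_eq_mul]
  have h1t : (1:ℝ) - t ≠ 0 := by intro h; linarith [ht1]
  have hset : {z | b.coord i z = t}
      = AffineMap.homothety (b i) (1 - t) '' {z | b.coord i z = 0} := by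
    ext z
    constructor
    · intro hz
      refine ⟨AffineMap.homothety (b i) (1 - t)⁻¹ z, ?_, ?_⟩
      · show b.coord i _ = 0
        rw [haff, hz]
        field_simp
        ring
      · rw [← AffineMap.homothety_mul_apply, mul_inv_cancel₀ h1t,
          AffineMap.homothety_one, AffineMap.id_apply]
    · rintro ⟨w, hw, rfl⟩
      show b.coord i _ = t
      rw [haff, hw]; ring
  have hne0 : {z | b.coord i z = 0}.Nonempty := by
    obtain ⟨j, hj⟩ := exists_ne i
    exact ⟨b j, b.coord_apply_ne (Ne.symm hj)⟩
  have hdlde : dl = (1 - t) * de := by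
    rw [hdl, hde, hset, infDist_homothety_image b i (1 - t) (by linarith) _ hne0]
  have hdepos : 0 < de := by
    rw [hde]
    rw [← (isClosed_eq (b.coord i).continuous_of_finiteDimensional
      continuous_const).notMem_iff_infDist_pos hne0]
    simp only [mem_setOf_eq]
    rw [b.coord_apply_eq]
    norm_num
  have hratio : min de (r * dl) / de = min 1 (r * (1 - t)) := by
    rw [hdlde]
    rcases le_total 1 (r * (1 - t)) with h | h
    · rw [min_eq_left (by nlinarith), min_eq_left h, div_self (ne_of_gt hdepos)]
    · rw [min_eq_right (by nlinarith), min_eq_right h]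
      field_simp
  rw [hratio]
  have hk0 : 0 < r * (1 - t) := by nlinarith
  rcases le_or_gt (r * (1 - t)) 1 with h | h
  · rw [min_eq_right h]
    show (AffineMap.homothety (b i) (r * (1 - t)) '' Tri b) ∩ Tri b = _
    exact inter_eq_left.mpr (homothety_image_subset b i (le_of_lt hk0) h)
  · rw [min_eq_left (le_of_lt h), AffineMap.homothety_one]
    simp only [AffineMap.coe_id, image_id]
    show (AffineMap.homothety (b i) (r * (1 - t)) '' Tri b) ∩ Tri b = Tri b
    exact inter_eq_right.mpr (subset_homothety_image b i (le_of_lt h))
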